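/- arXiv:1909.12713 — 2 statements merged into one kernel-verified Lean document; each statement's English description precedes it below -/
import Mathlib

section
/- Let ≤ be a well-order on objects such that tuples of equal length are ordered lexicographically and finite sets are ordered by comparing their sorted sequences lexicographically. If o is an object, a ∈ atoms(o), a' ∈ uset(a) with a' < a and a' ∉ atoms(o), and π is the transposition swapping a and a' (identity elsewhere), then o^π < o. -/
/-- Objects built inductively from atoms by finite tuples and finite sets
(a set node carries the list of its elements). -/
inductive Obj (A : Type) : Type
  | atom : A → Obj A
  | tup  : List (Obj A) → Obj A
  | sett : List (Obj A) → Obj A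

/-- Applying a map on atoms to an object, recursively. -/
def Obj.applyPerm {A : Type} (π : A → A) : Obj A → Obj A
  | .atom a => .atom (π a)
  | .tup l => .tup (l.attach.map (fun o => Obj.applyPerm π o.1))
  | .sett l => .sett (l.attach.map (fun o => Obj.applyPerm π o.1))
decreasing_by all_goals (have := List.sizeOf_lt_of_mem o.2; simp at this ⊢; omega)

/-- The list of atoms occurring in an object. -/
def Obj.atomsList {A : Type} : Obj A → List A
  | .atom a => [a]
  | .tup l => l.attach.flatMap (fun o => Obj.atomsList o.1)
  | .sett l => l.attach.flatMap (fun o => Obj.atomsList o.1)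
decreasing_by all_goals (have := List.sizeOf_lt_of_mem o.2; simp at this ⊢; omega)

/-- The set of atoms occurring in an object. -/
def Obj.atoms {A : Type} (o : Obj A) : Set A := {a | a ∈ o.atomsList}

/-- Well-formed objects: the element lists of set nodes are strictly sorted
(so they faithfully represent finite sets, listed in increasing order). -/
def Obj.WF {A : Type} [LinearOrder (Obj A)] : Obj A → Prop
  | .atom _ => True
  | .tup l => ∀ o ∈ l, Obj.WF o
  | .sett l => l.Pairwise (· < ·) ∧ ∀ o ∈ l, Obj.WF o

/-- Applying a map on atoms to an object, recursively; the element list of a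
set node is re-sorted, so that set nodes keep representing sets. -/
def Obj.applyPermS {A : Type} [LinearOrder (Obj A)] (π : A → A) : Obj A → Obj A
  | .atom a => .atom (π a)
  | .tup l => .tup (l.attach.map (fun o => Obj.applyPermS π o.1))
  | .sett l => .sett ((l.attach.map (fun o => Obj.applyPermS π o.1)).mergeSort
      (fun a b => decide (a ≤ b)))
decreasing_by all_goals (have := List.sizeOf_lt_of_mem o.2; simp at this ⊢; omega)

/-! ### Auxiliary generic order lemmas -/

section Generic
open List
variable {β : Type*} [LinearOrder β]

private lemma my_forall2_erase : ∀ {t' t : List β}, Forall₂ (· ≤ ·) t' t → t.Pairwise (· ≤ ·) →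
    ∀ {z}, z ∈ t' → Forall₂ (· ≤ ·) (t'.erase z) t.tail := by
  intro t' t h
  induction h with
  | nil => intro _ z hz; simp at hz
  | cons hxy hf ih =>
    rename_i x y t' t
    intro hs z hz
    by_cases hzx : x = z
    · subst hzx
      simpa [List.erase_cons_head] using hf
    · have hz' : z ∈ t' := by
        rcases List.mem_cons.mp hz with h | h
        · exact absurd h.symm hzx
        · exact h
      rw [List.erase_cons_tail (by simpa using hzx)]
      simp only [List.tail_cons] at *
      cases hf with
      | nil => simp at hz'
      | cons huv hf2 =>
        constructor
        · exact le_trans hxy (List.rel_of_pairwise_cons hs (by simp))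
        · exact ih (List.Pairwise.of_cons hs) hz'

private lemma my_sorted_dom : ∀ (l : List β) (m l' : List β), m.Pairwise (· ≤ ·) →
    l.Pairwise (· ≤ ·) → m.Perm l' → Forall₂ (· ≤ ·) l' l → Forall₂ (· ≤ ·) m l := by
  intro l
  induction l with
  | nil => intro m l' _ _ hp hf
           cases hf; simpa using hp.symm
  | cons y t ih =>
    intro m l' hm hl hp hf
    cases m with
    | nil => have := hp.length_eq; have := hf.length_eq; simp at *; omega
    | cons z s =>
      have hzl' : z ∈ l' := hp.mem_iff.mp (by simp)
      obtain ⟨x, t', rfl⟩ : ∃ x t', l' = x :: t' := by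
        cases l' with
        | nil => simp at hzl'
        | cons x t' => exact ⟨x, t', rfl⟩
      have hxy : x ≤ y := (List.forall₂_cons.mp hf).1
      have hft : Forall₂ (· ≤ ·) t' t := (List.forall₂_cons.mp hf).2
      have hzx : z ≤ x := by
        have hx : x ∈ z :: s := hp.mem_iff.mpr (by simp)
        rcases hx with _ | hx
        · exact le_refl _
        · exact List.rel_of_pairwise_cons hm (by assumption)
      constructor
      · exact le_trans hzx hxy
      · have hperm : s.Perm ((x :: t').erase z) := by
          have := hp.erase z
          rwa [List.erase_cons_head] at this
        have hforall : Forall₂ (· ≤ ·) ((x :: t').erase z) t := by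
          have := my_forall2_erase hf hl hzl'
          simpa using this
        exact ih s _ (hm.of_cons) (hl.of_cons) hperm hforall

private lemma my_countP_le_forall2 (p : β → Bool) (mono : ∀ x y : β, x ≤ y → p x → p y) :
    ∀ {l' l : List β}, Forall₂ (· ≤ ·) l' l → countP p l' ≤ countP p l := by
  intro l' l h
  induction h with
  | nil => simp
  | cons hxy hf ih =>
    rename_i x y t' t
    simp only [countP_cons]
    by_cases hx : p x = true
    · rw [if_pos hx, if_pos (mono _ _ hxy hx)]; omega
    · rw [if_neg hx]; split <;> omega

private lemma my_perm_forall2_le_eq : ∀ {l' l : List β}, Forall₂ (· ≤ ·) l' l →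
    l'.Perm l → l' = l := by
  intro l' l h
  induction h with
  | nil => intro; rfl
  | cons hxy hf ih =>
    rename_i x y t' t
    intro hp
    have hxeq : x = y := by
      by_contra hne
      have hxy' : x < y := lt_of_le_of_ne hxy hne
      have hc := hp.countP_eq (fun b => decide (y ≤ b))
      have h1 : countP (fun b => decide (y ≤ b)) t' ≤ countP (fun b => decide (y ≤ b)) t :=
        my_countP_le_forall2 _ (fun u v huv hu => by simp at hu ⊢; exact le_trans hu huv) hf
      simp [countP_cons, not_le.mpr hxy'] at hc
      omega
    subst hxeq
    have := ih (hp.cons_inv)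
    rw [this]

private lemma my_lex_of_forall2 : ∀ {m l : List β}, Forall₂ (· ≤ ·) m l → m ≠ l →
    List.Lex (· < ·) m l := by
  intro m l h
  induction h with
  | nil => intro h; exact absurd rfl h
  | cons hxy hf ih =>
    rename_i x y t' t
    intro hne
    rcases lt_or_eq_of_le hxy with h | rfl
    · exact List.Lex.rel h
    · exact List.Lex.cons (ih (fun he => hne (by rw [he])))

private lemma my_lex_sett {m l l' : List β} (hm : m.Pairwise (· ≤ ·)) (hl : l.Pairwise (· ≤ ·))
    (hp : m.Perm l') (hf : Forall₂ (· ≤ ·) l' l) (hne : l' ≠ l) : List.Lex (· < ·) m l := by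
  have hdom := my_sorted_dom l m l' hm hl hp hf
  apply my_lex_of_forall2 hdom
  rintro rfl
  exact hne (my_perm_forall2_le_eq hf hp.symm)

private lemma my_map_self_of_eq {α : Type*} {f : α → α} :
    ∀ {l : List α}, l.map f = l → ∀ x ∈ l, f x = x := by
  intro l
  induction l with
  | nil => simp
  | cons h t ih =>
    intro he x hx
    simp only [List.map_cons, List.cons.injEq] at he
    rcases List.mem_cons.mp hx with rfl | hx
    · exact he.1
    · exact ih he.2 x hx

private lemma my_lex_map {α : Type*} [Preorder α] {f : α → α} {p : α → Prop} :
    ∀ l : List α, (∀ x ∈ l, (¬ p x → f x = x) ∧ (p x → f x < x)) →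
      (∃ x ∈ l, p x) → List.Lex (· < ·) (l.map f) l := by
  intro l
  induction l with
  | nil => rintro _ ⟨x, hx, _⟩; simp at hx
  | cons h t ih =>
    intro hall hex
    by_cases hp : p h
    · exact List.Lex.rel ((hall h (by simp)).2 hp)
    · rw [List.map_cons, (hall h (by simp)).1 hp]
      apply List.Lex.cons
      apply ih (fun x hx => hall x (by simp [hx]))
      rcases hex with ⟨x, hx, hpx⟩
      rcases List.mem_cons.mp hx with rfl | hx
      · exact absurd hpx hp
      · exact ⟨x, hx, hpx⟩

end Generic

/-! ### Auxiliary Obj lemmas -/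

section ObjAux
variable {A : Type} [LinearOrder (Obj A)] (π : A → A)

private lemma my_applyPermS_atom (b : A) :
    Obj.applyPermS π (.atom b) = .atom (π b) := by
  rw [Obj.applyPermS]

private lemma my_applyPermS_tup (l : List (Obj A)) :
    Obj.applyPermS π (.tup l) = .tup (l.map (Obj.applyPermS π)) := by
  rw [Obj.applyPermS]; simp

private lemma my_applyPermS_sett (l : List (Obj A)) :
    Obj.applyPermS π (.sett l) = .sett ((l.map (Obj.applyPermS π)).mergeSort
      (fun a b => decide (a ≤ b))) := by
  rw [Obj.applyPermS]; simp

omit [LinearOrder (Obj A)] in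
private lemma my_atomsList_tup (l : List (Obj A)) (x : A) :
    x ∈ (Obj.tup l).atomsList ↔ ∃ y ∈ l, x ∈ y.atomsList := by
  rw [Obj.atomsList]; simp

omit [LinearOrder (Obj A)] in
private lemma my_atomsList_sett (l : List (Obj A)) (x : A) :
    x ∈ (Obj.sett l).atomsList ↔ ∃ y ∈ l, x ∈ y.atomsList := by
  rw [Obj.atomsList]; simp

omit [LinearOrder (Obj A)] in
private lemma my_atomsList_atom (b x : A) :
    x ∈ (Obj.atom b (A := A)).atomsList ↔ x = b := by
  rw [Obj.atomsList]; simp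

private lemma my_mergeSort_sorted_le (l : List (Obj A)) :
    (l.mergeSort (fun a b => decide (a ≤ b))).Pairwise (· ≤ ·) := by
  have := List.pairwise_mergeSort (le := fun a b : Obj A => decide (a ≤ b))
    (fun a b c hab hbc => by simp_all; exact le_trans hab hbc)
    (fun a b => by simpa using le_total a b) l
  exact this.imp (fun h => by simpa using h)

end ObjAux

/-! ### Key lemma -/

private theorem my_key {A : Type} [LinearOrder A] [LinearOrder (Obj A)]
    (hatom : ∀ a b : A, Obj.atom a < Obj.atom b ↔ a < b)
    (htup : ∀ l₁ l₂ : List (Obj A), l₁.length = l₂.length →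
        (Obj.tup l₁ < Obj.tup l₂ ↔ List.Lex (· < ·) l₁ l₂))
    (hsett : ∀ l₁ l₂ : List (Obj A), l₁.Pairwise (· < ·) → l₂.Pairwise (· < ·) →
        (Obj.sett l₁ < Obj.sett l₂ ↔ List.Lex (· < ·) l₁ l₂))
    (a a' : A) (hlt : a' < a) :
    ∀ o : Obj A, o.WF → a' ∉ o.atomsList →
      Obj.applyPermS (⇑(Equiv.swap a a')) (Obj.applyPermS (⇑(Equiv.swap a a')) o) = o ∧
      (a ∉ o.atomsList → Obj.applyPermS (⇑(Equiv.swap a a')) o = o) ∧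
      (a ∈ o.atomsList → Obj.applyPermS (⇑(Equiv.swap a a')) o < o)
  | .atom b => by
    intro _ hA
    rw [my_atomsList_atom] at hA
    have hb' : b ≠ a' := fun h => hA h.symm
    refine ⟨?_, ?_, ?_⟩
    · rw [my_applyPermS_atom, my_applyPermS_atom, Equiv.swap_apply_self]
    · intro hna
      rw [my_atomsList_atom] at hna
      rw [my_applyPermS_atom, Equiv.swap_apply_of_ne_of_ne (fun h => hna h.symm) hb']
    · intro hmem
      rw [my_atomsList_atom] at hmem
      subst hmem
      rw [my_applyPermS_atom, Equiv.swap_apply_left]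
      exact (hatom a' a).mpr hlt
  | .tup l => by
    intro hwf hA
    rw [Obj.WF] at hwf
    have hwf' : ∀ x ∈ l, Obj.WF x := hwf
    have hA' : ∀ x ∈ l, a' ∉ x.atomsList := by
      intro x hx hax
      exact hA ((my_atomsList_tup l a').mpr ⟨x, hx, hax⟩)
    have IH : ∀ x ∈ l,
        Obj.applyPermS (⇑(Equiv.swap a a')) (Obj.applyPermS (⇑(Equiv.swap a a')) x) = x ∧
        (a ∉ x.atomsList → Obj.applyPermS (⇑(Equiv.swap a a')) x = x) ∧
        (a ∈ x.atomsList → Obj.applyPermS (⇑(Equiv.swap a a')) x < x) :=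
      fun x hx => my_key hatom htup hsett a a' hlt x (hwf' x hx) (hA' x hx)
    refine ⟨?_, ?_, ?_⟩
    · rw [my_applyPermS_tup, my_applyPermS_tup, List.map_map]
      congr 1
      conv_rhs => rw [← List.map_id l]
      exact List.map_congr_left (fun x hx => (IH x hx).1)
    · intro hna
      rw [my_applyPermS_tup]
      congr 1
      conv_rhs => rw [← List.map_id l]
      refine List.map_congr_left (fun x hx => (IH x hx).2.1 ?_)
      intro hax
      exact hna ((my_atomsList_tup l a).mpr ⟨x, hx, hax⟩)
    · intro hmem
      rw [my_applyPermS_tup]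
      rw [htup _ _ (by simp)]
      exact my_lex_map (p := fun x => a ∈ x.atomsList) l (fun x hx => (IH x hx).2)
        ((my_atomsList_tup l a).mp hmem)
  | .sett l => by
    intro hwf hA
    rw [Obj.WF] at hwf
    obtain ⟨hsort, hwf'⟩ := hwf
    have hA' : ∀ x ∈ l, a' ∉ x.atomsList := by
      intro x hx hax
      exact hA ((my_atomsList_sett l a').mpr ⟨x, hx, hax⟩)
    have IH : ∀ x ∈ l,
        Obj.applyPermS (⇑(Equiv.swap a a')) (Obj.applyPermS (⇑(Equiv.swap a a')) x) = x ∧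
        (a ∉ x.atomsList → Obj.applyPermS (⇑(Equiv.swap a a')) x = x) ∧
        (a ∈ x.atomsList → Obj.applyPermS (⇑(Equiv.swap a a')) x < x) :=
      fun x hx => my_key hatom htup hsett a a' hlt x (hwf' x hx) (hA' x hx)
    set f : Obj A → Obj A := Obj.applyPermS (⇑(Equiv.swap a a')) with hf
    set l' : List (Obj A) := l.map f with hl'
    set m : List (Obj A) := l'.mergeSort (fun a b => decide (a ≤ b)) with hmdef
    have hml' : m.Perm l' := List.mergeSort_perm l' _
    have hsortle : l.Pairwise (· ≤ ·) := hsort.imp (fun h => le_of_lt h)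
    have hle : List.Forall₂ (· ≤ ·) l' l := by
      rw [hl', List.forall₂_map_left_iff]
      rw [List.forall₂_same]
      intro x hx
      by_cases hax : a ∈ x.atomsList
      · exact le_of_lt ((IH x hx).2.2 hax)
      · exact le_of_eq ((IH x hx).2.1 hax)
    have hinv : ∀ x ∈ l, f (f x) = x := fun x hx => (IH x hx).1
    refine ⟨?_, ?_, ?_⟩
    · rw [hf, my_applyPermS_sett, my_applyPermS_sett, ← hf]
      congr 1
      have hperm : (m.map f).mergeSort (fun a b => decide (a ≤ b)) |>.Perm l := by
        refine ((List.mergeSort_perm _ _).trans ?_)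
        refine (hml'.map f).trans ?_
        rw [hl', List.map_map]
        conv_rhs => rw [← List.map_id l]
        exact (List.map_congr_left (fun x hx => hinv x hx)) ▸ List.Perm.refl _
      exact List.Perm.eq_of_pairwise' (my_mergeSort_sorted_le _) hsortle hperm
    · intro hna
      rw [hf, my_applyPermS_sett, ← hf]
      congr 1
      have hll : l.map f = l := by
        conv_rhs => rw [← List.map_id l]
        refine List.map_congr_left (fun x hx => (IH x hx).2.1 ?_)
        intro hax
        exact hna ((my_atomsList_sett l a).mpr ⟨x, hx, hax⟩)
      rw [hll]
      exact List.Perm.eq_of_pairwise' (my_mergeSort_sorted_le _) hsortle (List.mergeSort_perm l _)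
    · intro hmem
      rw [hf, my_applyPermS_sett, ← hf, ← hl', ← hmdef]
      have hnodupl : l.Nodup := hsort.nodup
      have hnodupl' : l'.Nodup := by
        rw [hl']
        refine List.Nodup.map_on ?_ hnodupl
        intro x hx y hy hxy
        have := hinv x hx
        rw [hxy, hinv y hy] at this
        exact this.symm
      have hmsorted : m.Pairwise (· < ·) :=
        ((my_mergeSort_sorted_le l').and (hml'.symm.nodup hnodupl')).imp (fun h => lt_of_le_of_ne h.1 h.2)
      rw [hsett m l hmsorted hsort]
      obtain ⟨x, hx, hax⟩ := (my_atomsList_sett l a).mp hmem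
      have hne : l' ≠ l := by
        intro he
        have := my_map_self_of_eq (f := f) (l := l) (by rw [← hl']; exact he) x hx
        exact absurd this (ne_of_lt ((IH x hx).2.2 hax))
      exact my_lex_sett (my_mergeSort_sorted_le l') hsortle hml' hle hne
termination_by o => sizeOf o
decreasing_by all_goals (have := List.sizeOf_lt_of_mem hx; simp at this ⊢; omega)

/-- if a ∈ atoms(o), a' ∈ uset(a), a' < a and a' ∉ atoms(o), then
applying the transposition swapping a and a' yields a strictly smaller object. -/
theorem swap_missing_smaller_atom_decreases {A : Type} [LinearOrder A] [LinearOrder (Obj A)] [WellFoundedLT (Obj A)]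
    (hatom : ∀ a b : A, Obj.atom a < Obj.atom b ↔ a < b)
    (htup : ∀ l₁ l₂ : List (Obj A), l₁.length = l₂.length →
        (Obj.tup l₁ < Obj.tup l₂ ↔ List.Lex (· < ·) l₁ l₂))
    (hsett : ∀ l₁ l₂ : List (Obj A), l₁.Pairwise (· < ·) → l₂.Pairwise (· < ·) →
        (Obj.sett l₁ < Obj.sett l₂ ↔ List.Lex (· < ·) l₁ l₂))
    (uset : A → Set A) (h1 : ∀ a, a ∈ uset a)
    (h2 : ∀ a b, uset a = uset b ∨ uset a ∩ uset b = ∅)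
    (o : Obj A) (hwf : o.WF)
    (a a' : A) (ha : a ∈ o.atoms) (hu : a' ∈ uset a) (hlt : a' < a)
    (hna : a' ∉ o.atoms) :
    o.applyPermS (Equiv.swap a a') < o := by
  exact (my_key hatom htup hsett a a' hlt o hwf hna).2.2 ha
end

section
/- If an object o is such that atoms(o) contains a gap (there exist a ∈ atoms(o) and a' ∈ uset(a) with a' < a and a' ∉ atoms(o)), then o is not a canonical form, i.e., there exists an object o' isomorphic to o with o' < o. -/
section AuxLemmas
set_option linter.unusedSectionVars false

section ListAux
variable {α : Type} [LinearOrder α]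

theorem ptwise_eq_or_lex : ∀ {l' l : List α}, List.Forall₂ (· ≤ ·) l' l →
    l' = l ∨ List.Lex (· < ·) l' l := by
  intro l' l h
  induction h with
  | nil => exact Or.inl rfl
  | @cons a b l1 l2 hab _ ih =>
    rcases lt_or_eq_of_le hab with h | rfl
    · exact Or.inr (List.Lex.rel h)
    · rcases ih with rfl | h
      · exact Or.inl rfl
      · exact Or.inr (List.Lex.cons h)

theorem sorted_getElem_le_index {l : List α} (hl : l.Pairwise (· ≤ ·)) {j i : ℕ}
    (hj : j < l.length) (hi : i < l.length) (hji : j ≤ i) : l[j] ≤ l[i] := by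
  rcases eq_or_lt_of_le hji with rfl | h
  · exact le_refl _
  · exact List.pairwise_iff_getElem.mp hl j i hj hi h

theorem sorted_getElem_le_of_countP {m : List α} (hm : m.Pairwise (· ≤ ·)) {c : α} {i : ℕ}
    (hi : i < m.length) (hc : i < m.countP (fun x => decide (x ≤ c))) : m[i] ≤ c := by
  by_contra h
  push_neg at h
  have h0 : m.countP (fun x => decide (x ≤ c)) =
      (m.take i).countP (fun x => decide (x ≤ c)) +
      (m.drop i).countP (fun x => decide (x ≤ c)) := by
    conv_lhs => rw [← List.take_append_drop i m]
    rw [List.countP_append]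
  have hdrop : (m.drop i).countP (fun x => decide (x ≤ c)) = 0 := by
    rw [List.countP_eq_zero]
    intro x hx
    rcases List.mem_iff_getElem.mp hx with ⟨j, hj, rfl⟩
    have hlen : (m.drop i).length = m.length - i := List.length_drop
    have hij : i + j < m.length := by omega
    have : (m.drop i)[j] = m[i + j] := by
      rw [List.getElem_drop]
    rw [this]
    simp only [decide_eq_true_eq]
    intro hle
    have : m[i] ≤ m[i + j] := sorted_getElem_le_index hm hi hij (by omega)
    exact absurd (le_trans this hle) (not_le.mpr h)
  have htake : (m.take i).countP (fun x => decide (x ≤ c)) ≤ i := by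
    calc (m.take i).countP (fun x => decide (x ≤ c)) ≤ (m.take i).length :=
          List.countP_le_length
      _ ≤ i := by rw [List.length_take]; omega
  omega

theorem countP_lt_of_prefix {l : List α} (p : α → Bool) {i : ℕ} (hi : i < l.length)
    (h : ∀ (j : ℕ) (hj : j < l.length), j ≤ i → p l[j]) : i < l.countP p := by
  have h0 : l.countP p = (l.take (i+1)).countP p + (l.drop (i+1)).countP p := by
    conv_lhs => rw [← List.take_append_drop (i+1) l]
    rw [List.countP_append]
  have htake : (l.take (i+1)).countP p = (l.take (i+1)).length := by
    rw [List.countP_eq_length]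
    intro x hx
    rcases List.mem_iff_getElem.mp hx with ⟨j, hj, rfl⟩
    have hjl : j < l.length := by
      have := List.length_take (i := i+1) (l := l)
      omega
    have : (l.take (i+1))[j] = l[j] := List.getElem_take
    rw [this]
    exact h j hjl (by have := List.length_take (i := i+1) (l := l); omega)
  have : (l.take (i+1)).length = i + 1 := by rw [List.length_take]; omega
  omega

theorem mergeSort_forall₂_le {l' l : List α} (hl : l.Pairwise (· ≤ ·))
    (h : List.Forall₂ (· ≤ ·) l' l) :
    List.Forall₂ (· ≤ ·) (l'.mergeSort (fun a b => decide (a ≤ b))) l := by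
  have hperm : List.Perm (l'.mergeSort (fun a b => decide (a ≤ b))) l' :=
    List.mergeSort_perm l' _
  have hlen : l'.length = l.length := h.length_eq
  have hlenm : (l'.mergeSort (fun a b => decide (a ≤ b))).length = l.length := by
    rw [hperm.length_eq, hlen]
  rw [List.forall₂_iff_get]
  refine ⟨hlenm, fun i h₁ h₂ => ?_⟩
  simp only [List.get_eq_getElem]
  apply sorted_getElem_le_of_countP (List.pairwise_mergeSort' (· ≤ ·) l') h₁
  rw [hperm.countP_eq]
  apply countP_lt_of_prefix _ (by omega)
  intro j hj hji
  simp only [decide_eq_true_eq]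
  calc l'[j] ≤ l[j] := by
        have := (List.forall₂_iff_get.mp h).2 j hj (by omega)
        simpa using this
    _ ≤ l[i] := sorted_getElem_le_index hl (by omega) h₂ hji

end ListAux

variable {A : Type} [LinearOrder (Obj A)]

theorem Obj.applyPermS_atom (π : A → A) (a : A) :
    (Obj.atom a).applyPermS π = Obj.atom (π a) := by rw [Obj.applyPermS]

theorem Obj.applyPermS_tup (π : A → A) (l : List (Obj A)) :
    (Obj.tup l).applyPermS π = Obj.tup (l.map (Obj.applyPermS π)) := by
  rw [Obj.applyPermS]; simp

theorem Obj.applyPermS_sett (π : A → A) (l : List (Obj A)) :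
    (Obj.sett l).applyPermS π =
      Obj.sett ((l.map (Obj.applyPermS π)).mergeSort (fun a b => decide (a ≤ b))) := by
  rw [Obj.applyPermS]; simp

theorem Obj.mem_atomsList_tup {a : A} {l : List (Obj A)} :
    a ∈ (Obj.tup l).atomsList ↔ ∃ e ∈ l, a ∈ e.atomsList := by
  rw [Obj.atomsList]; simp

theorem Obj.mem_atomsList_sett {a : A} {l : List (Obj A)} :
    a ∈ (Obj.sett l).atomsList ↔ ∃ e ∈ l, a ∈ e.atomsList := by
  rw [Obj.atomsList]; simp

theorem Obj.mem_atomsList_atom {a b : A} :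
    a ∈ (Obj.atom b).atomsList ↔ a = b := by
  rw [Obj.atomsList]; simp

theorem Obj.WF_tup {l : List (Obj A)} : (Obj.tup l).WF ↔ ∀ o ∈ l, o.WF := by rw [Obj.WF]

theorem Obj.WF_sett {l : List (Obj A)} :
    (Obj.sett l).WF ↔ l.Pairwise (· < ·) ∧ ∀ o ∈ l, o.WF := by rw [Obj.WF]

set_option linter.unusedSectionVars false

theorem Obj.applyPermS_invol (π : A → A) (hπ : ∀ x, π (π x) = x) :
    ∀ u : Obj A, u.WF → (u.applyPermS π).applyPermS π = u
  | .atom a, _ => by rw [Obj.applyPermS_atom, Obj.applyPermS_atom, hπ]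
  | .tup l, hwf => by
    rw [Obj.WF_tup] at hwf
    rw [Obj.applyPermS_tup, Obj.applyPermS_tup, List.map_map]
    congr 1
    rw [show (Obj.applyPermS π ∘ Obj.applyPermS π) = fun e => (e.applyPermS π).applyPermS π
      from rfl]
    rw [List.map_congr_left (fun e he => Obj.applyPermS_invol π hπ e (hwf e he)), List.map_id']
  | .sett l, hwf => by
    rw [Obj.WF_sett] at hwf
    rw [Obj.applyPermS_sett, Obj.applyPermS_sett]
    congr 1
    have hmap : List.map (Obj.applyPermS π)
        (List.map (Obj.applyPermS π) l) = l := by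
      rw [List.map_map]
      rw [show (Obj.applyPermS π ∘ Obj.applyPermS π) = fun e => (e.applyPermS π).applyPermS π
        from rfl]
      rw [List.map_congr_left (fun e he => Obj.applyPermS_invol π hπ e (hwf.2 e he)),
        List.map_id']
    have hperm : List.Perm
        (List.map (Obj.applyPermS π)
          ((List.map (Obj.applyPermS π) l).mergeSort (fun a b => decide (a ≤ b)))) l := by
      have h := (List.mergeSort_perm (List.map (Obj.applyPermS π) l)
        (fun a b => decide (a ≤ b))).map (Obj.applyPermS π)
      rwa [hmap] at h
    exact List.Perm.eq_of_pairwise' (List.pairwise_mergeSort' (· ≤ ·) _)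
      (hwf.1.imp (fun h => le_of_lt h)) ((List.mergeSort_perm _ _).trans hperm)
termination_by u => sizeOf u
decreasing_by all_goals (have := List.sizeOf_lt_of_mem he; simp at this ⊢; omega)

theorem Obj.mem_atomsList_applyPermS (π : A → A) :
    ∀ u : Obj A, ∀ x ∈ u.atomsList, π x ∈ (u.applyPermS π).atomsList
  | .atom a, x, hx => by
    rw [Obj.mem_atomsList_atom] at hx
    rw [Obj.applyPermS_atom, Obj.mem_atomsList_atom, hx]
  | .tup l, x, hx => by
    rw [Obj.mem_atomsList_tup] at hx
    rcases hx with ⟨e, he, hxe⟩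
    rw [Obj.applyPermS_tup, Obj.mem_atomsList_tup]
    exact ⟨e.applyPermS π, List.mem_map_of_mem he,
      Obj.mem_atomsList_applyPermS π e x hxe⟩
  | .sett l, x, hx => by
    rw [Obj.mem_atomsList_sett] at hx
    rcases hx with ⟨e, he, hxe⟩
    rw [Obj.applyPermS_sett, Obj.mem_atomsList_sett]
    exact ⟨e.applyPermS π, List.mem_mergeSort.mpr (List.mem_map_of_mem he),
      Obj.mem_atomsList_applyPermS π e x hxe⟩
termination_by u => sizeOf u
decreasing_by all_goals (have := List.sizeOf_lt_of_mem he; simp at this ⊢; omega)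

theorem Obj.applyPermS_eq_or_lt [LinearOrder A]
    (hatom : ∀ a b : A, Obj.atom a < Obj.atom b ↔ a < b)
    (htup : ∀ l₁ l₂ : List (Obj A), l₁.length = l₂.length →
        (Obj.tup l₁ < Obj.tup l₂ ↔ List.Lex (· < ·) l₁ l₂))
    (hsett : ∀ l₁ l₂ : List (Obj A), l₁.Pairwise (· < ·) → l₂.Pairwise (· < ·) →
        (Obj.sett l₁ < Obj.sett l₂ ↔ List.Lex (· < ·) l₁ l₂))
    (π : A → A) (hπ : ∀ x, π (π x) = x) :
    ∀ u : Obj A, u.WF → (∀ x ∈ u.atomsList, π x ≤ x) →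
      u.applyPermS π = u ∨ u.applyPermS π < u
  | .atom a, _, hle => by
    rw [Obj.applyPermS_atom]
    rcases lt_or_eq_of_le (hle a (Obj.mem_atomsList_atom.mpr rfl)) with h | h
    · exact Or.inr ((hatom _ _).mpr h)
    · rw [h]; exact Or.inl rfl
  | .tup l, hwf, hle => by
    rw [Obj.WF_tup] at hwf
    have IH : ∀ e ∈ l, e.applyPermS π = e ∨ e.applyPermS π < e := fun e he =>
      Obj.applyPermS_eq_or_lt hatom htup hsett π hπ e (hwf e he)
        (fun x hx => hle x (Obj.mem_atomsList_tup.mpr ⟨e, he, hx⟩))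
    have hf : List.Forall₂ (· ≤ ·) (l.map (Obj.applyPermS π)) l := by
      rw [List.forall₂_map_left_iff]
      exact List.forall₂_same.mpr (fun e he => le_of_eq_or_lt (IH e he))
    rw [Obj.applyPermS_tup]
    rcases ptwise_eq_or_lex hf with h | h
    · rw [h]; exact Or.inl rfl
    · exact Or.inr ((htup _ _ (by simp)).mpr h)
  | .sett l, hwf, hle => by
    rw [Obj.WF_sett] at hwf
    have IH : ∀ e ∈ l, e.applyPermS π = e ∨ e.applyPermS π < e := fun e he =>
      Obj.applyPermS_eq_or_lt hatom htup hsett π hπ e (hwf.2 e he)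
        (fun x hx => hle x (Obj.mem_atomsList_sett.mpr ⟨e, he, hx⟩))
    have hf : List.Forall₂ (· ≤ ·) (l.map (Obj.applyPermS π)) l := by
      rw [List.forall₂_map_left_iff]
      exact List.forall₂_same.mpr (fun e he => le_of_eq_or_lt (IH e he))
    have hf' := mergeSort_forall₂_le (hwf.1.imp (fun h => le_of_lt h)) hf
    rw [Obj.applyPermS_sett]
    rcases ptwise_eq_or_lex hf' with h | h
    · rw [h]; exact Or.inl rfl
    · refine Or.inr ((hsett _ _ ?_ hwf.1).mpr h)
      refine List.sortedLT_iff_pairwise.mp (List.SortedLE.sortedLT_of_nodup (List.sortedLE_iff_pairwise.mpr (List.pairwise_mergeSort' (· ≤ ·) _)) ?_)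
      refine ((List.mergeSort_perm _ _).nodup_iff).mpr ?_
      refine List.Nodup.map_on ?_ hwf.1.nodup
      intro x hx y hy hxy
      have hx' := Obj.applyPermS_invol π hπ x (hwf.2 x hx)
      have hy' := Obj.applyPermS_invol π hπ y (hwf.2 y hy)
      rw [← hx', ← hy', hxy]
termination_by u => sizeOf u
decreasing_by all_goals (have := List.sizeOf_lt_of_mem he; simp at this ⊢; omega)

end AuxLemmas

/-- if atoms(o) contains a gap then o is not a canonical form:
some object isomorphic to o is strictly smaller. -/
theorem gap_not_canonical {A : Type} [LinearOrder A] [LinearOrder (Obj A)] [WellFoundedLT (Obj A)]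
    (hatom : ∀ a b : A, Obj.atom a < Obj.atom b ↔ a < b)
    (htup : ∀ l₁ l₂ : List (Obj A), l₁.length = l₂.length →
        (Obj.tup l₁ < Obj.tup l₂ ↔ List.Lex (· < ·) l₁ l₂))
    (hsett : ∀ l₁ l₂ : List (Obj A), l₁.Pairwise (· < ·) → l₂.Pairwise (· < ·) →
        (Obj.sett l₁ < Obj.sett l₂ ↔ List.Lex (· < ·) l₁ l₂))
    (uset : A → Set A) (h1 : ∀ a, a ∈ uset a)
    (h2 : ∀ a b, uset a = uset b ∨ uset a ∩ uset b = ∅)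
    (o : Obj A) (hwf : o.WF)
    (hgap : ∃ a ∈ o.atoms, ∃ a' ∈ uset a, a' < a ∧ a' ∉ o.atoms) :
    ∃ o' : Obj A,
      (∃ π : Equiv.Perm A, (∀ x, π x ∈ uset x) ∧ o' = o.applyPermS π) ∧
      o' < o := by
  rcases hgap with ⟨a, ha, a', ha'u, ha'a, ha'no⟩
  have haL : a ∈ o.atomsList := ha
  have ha'noL : a' ∉ o.atomsList := ha'no
  set π := Equiv.swap a a' with hπdef
  have hne : a ≠ a' := ne_of_gt ha'a
  have hπa : π a = a' := Equiv.swap_apply_left a a'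
  have hπ2 : ∀ x, (π : A → A) ((π : A → A) x) = x := fun x => Equiv.swap_apply_self a a' x
  have husame : uset a = uset a' := by
    rcases h2 a a' with h | h
    · exact h
    · exfalso
      have : a' ∈ uset a ∩ uset a' := ⟨ha'u, h1 a'⟩
      rw [h] at this
      exact this
  have hπuset : ∀ x, (π : A → A) x ∈ uset x := by
    intro x
    by_cases hx : x = a
    · subst hx; rw [hπa]; exact ha'u
    · by_cases hx' : x = a'
      · subst hx'
        rw [Equiv.swap_apply_right, ← husame]
        exact h1 a
      · rw [Equiv.swap_apply_of_ne_of_ne hx hx']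
        exact h1 x
  have hle : ∀ x ∈ o.atomsList, (π : A → A) x ≤ x := by
    intro x hx
    by_cases hxa : x = a
    · subst hxa; rw [hπa]; exact le_of_lt ha'a
    · by_cases hxa' : x = a'
      · exact absurd (hxa' ▸ hx) ha'noL
      · rw [Equiv.swap_apply_of_ne_of_ne hxa hxa']
  rcases Obj.applyPermS_eq_or_lt hatom htup hsett (π : A → A) hπ2 o hwf hle with heq | hlt
  · exfalso
    have := Obj.mem_atomsList_applyPermS (π : A → A) o a haL
    rw [heq, hπa] at this
    exact ha'noL this
  · exact ⟨o.applyPermS π, ⟨π, hπuset, rfl⟩, hlt⟩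
end
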